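/- Define, for each integer N ≥ 1, T(N) = √(6/(2^N·(N+1)(N+2)(N+3)))·Σ_m m²/√( ((N+1−m)/2)! · ((N+1+m)/2)! ), where the sum runs over integers m with 1 ≤ m ≤ N+1 and m ≡ N+1 (mod 2) (so that (N+1±m)/2 are nonnegative integers). Then T(N) converges to 0 as N → ∞. -/
import Mathlib

open Finset Filter

/-- The square-root fidelity between the resource state of non-optimal
probabilistic qubit PBT (N maximally entangled pairs) and the optimal
probabilistic resource state:
`T(N) = √(6/(2^N·(N+1)(N+2)(N+3)))·Σ_m m²/√(((N+1−m)/2)!·((N+1+m)/2)!)`,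
the sum over integers `1 ≤ m ≤ N+1` with `m ≡ N+1 (mod 2)` (so the factorial
arguments are the nonnegative integers `(N+1−m)/2` and `(N+1+m)/2`). -/
noncomputable def Tfid (N : ℕ) : ℝ :=
  Real.sqrt (6 / ((2 : ℝ) ^ N * ((N : ℝ) + 1) * ((N : ℝ) + 2) * ((N : ℝ) + 3))) *
    ∑ m ∈ (Finset.Icc 1 (N + 1)).filter (fun m => m % 2 = (N + 1) % 2),
      (m : ℝ) ^ 2 /
        Real.sqrt ((Nat.factorial ((N + 1 - m) / 2) : ℝ) *
          (Nat.factorial ((N + 1 + m) / 2) : ℝ))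

lemma one_le_sqrt_fact_mul (a b : ℕ) :
    1 ≤ Real.sqrt ((Nat.factorial a : ℝ) * (Nat.factorial b : ℝ)) := by
  rw [Real.one_le_sqrt]
  have ha : (1:ℝ) ≤ (Nat.factorial a : ℝ) := by exact_mod_cast a.factorial_pos
  have hb : (1:ℝ) ≤ (Nat.factorial b : ℝ) := by exact_mod_cast b.factorial_pos
  nlinarith

lemma sqrt_two_pow (n : ℕ) : Real.sqrt ((2:ℝ) ^ n) = (Real.sqrt 2) ^ n := by
  rw [← Real.sqrt_sq (pow_nonneg (Real.sqrt_nonneg 2) n)]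
  congr 1
  rw [← pow_mul, mul_comm, pow_mul, Real.sq_sqrt (by norm_num : (0:ℝ) ≤ 2)]

/-- `T(N)` converges to `0` as `N → ∞`. -/
theorem Tfid_tendsto_zero : Tendsto Tfid atTop (nhds 0) := by
  have hs2 : (1:ℝ) < Real.sqrt 2 := by
    rw [show (1:ℝ) = Real.sqrt 1 by simp]
    exact Real.sqrt_lt_sqrt (by norm_num) (by norm_num)
  have hs2pos : (0:ℝ) < Real.sqrt 2 := by linarith
  apply squeeze_zero (g := fun n => (Real.sqrt 6 * Real.sqrt 2) *
      (((n + 1 : ℕ) : ℝ) ^ 3 / (Real.sqrt 2) ^ (n + 1)))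
  · intro n
    apply mul_nonneg (Real.sqrt_nonneg _)
    apply Finset.sum_nonneg
    intro m _
    exact div_nonneg (sq_nonneg _) (Real.sqrt_nonneg _)
  · intro n
    have hsum : (∑ m ∈ (Finset.Icc 1 (n + 1)).filter (fun m => m % 2 = (n + 1) % 2),
        (m : ℝ) ^ 2 / Real.sqrt ((Nat.factorial ((n + 1 - m) / 2) : ℝ) *
          (Nat.factorial ((n + 1 + m) / 2) : ℝ))) ≤ ((n:ℝ) + 1) ^ 3 := by
      have h1 : ∀ m ∈ (Finset.Icc 1 (n + 1)).filter (fun m => m % 2 = (n + 1) % 2),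
          (m : ℝ) ^ 2 / Real.sqrt ((Nat.factorial ((n + 1 - m) / 2) : ℝ) *
            (Nat.factorial ((n + 1 + m) / 2) : ℝ)) ≤ ((n:ℝ) + 1) ^ 2 := by
        intro m hm
        simp only [Finset.mem_filter, Finset.mem_Icc] at hm
        have hm' : (m : ℝ) ≤ (n : ℝ) + 1 := by exact_mod_cast hm.1.2
        calc (m : ℝ) ^ 2 / Real.sqrt _ ≤ (m : ℝ) ^ 2 :=
              div_le_self (sq_nonneg _) (one_le_sqrt_fact_mul _ _)
          _ ≤ ((n:ℝ) + 1) ^ 2 := by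
              apply pow_le_pow_left₀ (by positivity) hm'
      calc _ ≤ ((Finset.Icc 1 (n + 1)).filter (fun m => m % 2 = (n + 1) % 2)).card
            • (((n:ℝ) + 1) ^ 2) := Finset.sum_le_card_nsmul _ _ _ h1
        _ ≤ (n + 1) • (((n:ℝ) + 1) ^ 2) := by
            apply smul_le_smul_of_nonneg_right _ (by positivity)
            calc ((Finset.Icc 1 (n + 1)).filter _).card ≤ (Finset.Icc 1 (n + 1)).card :=
                  Finset.card_filter_le _ _
              _ = n + 1 := by simp
        _ = ((n:ℝ) + 1) ^ 3 := by
            rw [nsmul_eq_mul]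
            push_cast
            ring
    have hpre : Real.sqrt (6 / ((2 : ℝ) ^ n * ((n : ℝ) + 1) * ((n : ℝ) + 2) * ((n : ℝ) + 3)))
        ≤ Real.sqrt 6 / (Real.sqrt 2) ^ n := by
      rw [← sqrt_two_pow, ← Real.sqrt_div (by norm_num)]
      apply Real.sqrt_le_sqrt
      apply div_le_div_of_nonneg_left (by norm_num) (by positivity)
      have hp : (0:ℝ) < 2 ^ n := pow_pos (by norm_num) n
      have hn : (0:ℝ) ≤ (n:ℝ) := Nat.cast_nonneg n
      have h1 : (1:ℝ) ≤ ((n:ℝ)+1) * ((n:ℝ)+2) * ((n:ℝ)+3) := by nlinarith [mul_nonneg (mul_nonneg hn hn) hn, mul_nonneg hn hn]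
      nlinarith [mul_le_mul_of_nonneg_left h1 hp.le]
    have hsumnn : (0:ℝ) ≤ ∑ m ∈ (Finset.Icc 1 (n + 1)).filter (fun m => m % 2 = (n + 1) % 2),
        (m : ℝ) ^ 2 / Real.sqrt ((Nat.factorial ((n + 1 - m) / 2) : ℝ) *
          (Nat.factorial ((n + 1 + m) / 2) : ℝ)) :=
      Finset.sum_nonneg fun m _ => div_nonneg (sq_nonneg _) (Real.sqrt_nonneg _)
    calc Tfid n ≤ (Real.sqrt 6 / (Real.sqrt 2) ^ n) * (((n:ℝ) + 1) ^ 3) := by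
          unfold Tfid
          exact mul_le_mul hpre hsum hsumnn (by positivity)
      _ = (Real.sqrt 6 * Real.sqrt 2) * (((n + 1 : ℕ) : ℝ) ^ 3 / (Real.sqrt 2) ^ (n + 1)) := by
          push_cast
          rw [pow_succ]
          field_simp
          ring
  · have h := tendsto_pow_const_div_const_pow_of_one_lt 3 hs2
    have h2 : Tendsto (fun n => ((n + 1 : ℕ) : ℝ) ^ 3 / (Real.sqrt 2) ^ (n + 1))
        atTop (nhds 0) := h.comp (tendsto_add_atTop_nat 1)
    simpa using h2.const_mul (Real.sqrt 6 * Real.sqrt 2)
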